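/- The inner Cheeger constant of the d-regular tree T_d equals (d−2)/(d−1); that is, the infimum over all domains D in T_d of the real ratio |∂D| / |D| is equal to (d−2)/(d−1). -/

import Mathlib

/-- Inner vertex boundary of a finite vertex set `D`: vertices of `D` having a neighbor
outside `D`. -/
noncomputable def innerBoundary {V : Type*} (G : SimpleGraph V) (D : Finset V) : Finset V := by
  classical exact D.filter (fun x => ∃ y, y ∉ D ∧ G.Adj x y)

/-- Outer vertex boundary of `D`: vertices outside `D` having a neighbor in `D`. -/
def outerBoundary {V : Type*} (G : SimpleGraph V) (D : Finset V) : Set V :=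
  {y | y ∉ D ∧ ∃ x ∈ D, G.Adj x y}

/-- Number of neighbors of `x` lying in `D`. -/
noncomputable def degIn {V : Type*} (G : SimpleGraph V) (D : Finset V) (x : V) : ℕ := by
  classical exact (D.filter (fun y => G.Adj x y)).card

/-- A domain: a finite nonempty vertex set whose induced subgraph is connected. -/
def IsGraphDomain {V : Type*} (G : SimpleGraph V) (D : Finset V) : Prop :=
  D.Nonempty ∧ (G.induce (↑D : Set V)).Connected

/-- `G` is a `d`-regular tree: connected, acyclic, and every vertex has degree `d`. -/
def IsRegularTree {V : Type*} (G : SimpleGraph V) (d : ℕ) : Prop :=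
  G.Connected ∧ G.IsAcyclic ∧ ∀ v : V, (G.neighborSet v).ncard = d

/-- Boundary branching excess `τ(D) = Σ_{x ∈ ∂D} (deg_D(x) − 1)`. -/
noncomputable def tauD {V : Type*} (G : SimpleGraph V) (D : Finset V) : ℕ :=
  ∑ x ∈ innerBoundary G D, (degIn G D x - 1)

/-- Residual boundary `R(D) = {x ∈ ∂D : deg_D(x) ≥ 2}`. -/
noncomputable def residualBoundary {V : Type*} (G : SimpleGraph V) (D : Finset V) : Finset V := by
  classical exact (innerBoundary G D).filter (fun x => 2 ≤ degIn G D x)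

/-- `D` is isoperimetrically optimal: its inner boundary is smallest among all domains
of the same cardinality. -/
def IsOptimal {V : Type*} (G : SimpleGraph V) (D : Finset V) : Prop :=
  ∀ D' : Finset V, IsGraphDomain G D' → D'.card = D.card →
    (innerBoundary G D).card ≤ (innerBoundary G D').card

section CheegerAux

open SimpleGraph Finset

variable {V : Type*} {d : ℕ} {G : SimpleGraph V} {D S : Finset V} {x : V}

lemma mem_innerBoundary {x : V} :
    x ∈ innerBoundary G D ↔ x ∈ D ∧ ∃ y, y ∉ D ∧ G.Adj x y := by
  simp only [innerBoundary, Finset.mem_filter]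

lemma innerBoundary_subset : innerBoundary G D ⊆ D := fun x hx => (mem_innerBoundary.mp hx).1

lemma degIn_def [DecidablePred (G.Adj x ·)] :
    degIn G D x = (D.filter (fun y => G.Adj x y)).card := by
  simp only [degIn]; congr!

lemma nbr_fin (hreg : ∀ v : V, (G.neighborSet v).ncard = d) (hd : 2 ≤ d) (v : V) :
    (G.neighborSet v).Finite :=
  Set.finite_of_ncard_ne_zero (by rw [hreg]; omega)

lemma degIn_le (hreg : ∀ v : V, (G.neighborSet v).ncard = d) (hd : 2 ≤ d) :
    degIn G D x ≤ d := by
  classical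
  rw [degIn_def]
  have hfin := nbr_fin hreg hd x
  have hsub : D.filter (fun y => G.Adj x y) ⊆ hfin.toFinset := by
    intro y hy
    simp only [Set.Finite.mem_toFinset, SimpleGraph.mem_neighborSet]
    exact (Finset.mem_filter.mp hy).2
  calc (D.filter (fun y => G.Adj x y)).card ≤ hfin.toFinset.card := Finset.card_le_card hsub
    _ = d := by rw [← Set.ncard_eq_toFinset_card _ hfin, hreg]

lemma degIn_lt_iff (hreg : ∀ v : V, (G.neighborSet v).ncard = d) (hd : 2 ≤ d) :
    degIn G D x < d ↔ ∃ y, y ∉ D ∧ G.Adj x y := by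
  classical
  rw [degIn_def]
  have hfin := nbr_fin hreg hd x
  have hN : hfin.toFinset.card = d := by rw [← Set.ncard_eq_toFinset_card _ hfin, hreg]
  have hsub : D.filter (fun y => G.Adj x y) ⊆ hfin.toFinset := by
    intro y hy
    simp only [Set.Finite.mem_toFinset, SimpleGraph.mem_neighborSet]
    exact (Finset.mem_filter.mp hy).2
  constructor
  · intro hlt
    by_contra hcon
    push_neg at hcon
    have : hfin.toFinset ⊆ D.filter (fun y => G.Adj x y) := by
      intro y hy
      simp only [Set.Finite.mem_toFinset, SimpleGraph.mem_neighborSet] at hy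
      exact Finset.mem_filter.mpr ⟨by by_contra hns; exact hcon y hns hy, hy⟩
    have := Finset.card_le_card this
    omega
  · rintro ⟨y, hyD, hadj⟩
    have hyN : y ∈ hfin.toFinset := by
      simp only [Set.Finite.mem_toFinset, SimpleGraph.mem_neighborSet]; exact hadj
    have hynotin : y ∉ D.filter (fun y => G.Adj x y) := by
      simp only [Finset.mem_filter]; tauto
    have : D.filter (fun y => G.Adj x y) ⊂ hfin.toFinset :=
      ⟨hsub, fun h => hynotin (h hyN)⟩
    have := Finset.card_lt_card this
    omega

lemma degIn_eq_d (hreg : ∀ v : V, (G.neighborSet v).ncard = d) (hd : 2 ≤ d)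
    (h : ¬ ∃ y, y ∉ D ∧ G.Adj x y) : degIn G D x = d := by
  have h1 := degIn_le (D := D) (x := x) hreg hd
  have h2 := (degIn_lt_iff (D := D) (x := x) hreg hd).not.mpr (by tauto)
  omega

lemma mem_innerBoundary_of_degIn_lt (hreg : ∀ v : V, (G.neighborSet v).ncard = d)
    (hd : 2 ≤ d) (hx : x ∈ D) (h : degIn G D x < d) : x ∈ innerBoundary G D :=
  mem_innerBoundary.mpr ⟨hx, (degIn_lt_iff hreg hd).mp h⟩

lemma unique_attach (hacyc : G.IsAcyclic) {C : Set V}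
    (hC : (G.induce C).Connected) {a b y : V} (ha : a ∈ C) (hb : b ∈ C) (hy : y ∉ C)
    (hya : G.Adj y a) (hyb : G.Adj y b) : a = b := by
  classical
  obtain ⟨w⟩ := hC.preconnected ⟨a, ha⟩ ⟨b, hb⟩
  let w' : G.Walk a b := w.map (SimpleGraph.Embedding.induce C).toHom
  have hsupp : ∀ z ∈ w'.support, z ∈ C := by
    intro z hz
    rw [show w'.support = w.support.map (SimpleGraph.Embedding.induce C).toHom from
      SimpleGraph.Walk.support_map _ _, List.mem_map] at hz
    obtain ⟨u, _, rfl⟩ := hz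
    exact u.2
  have hp : w'.bypass.IsPath := SimpleGraph.Walk.bypass_isPath w'
  have hys : y ∉ w'.bypass.support := fun h => hy (hsupp _ (w'.support_bypass_subset h))
  have hp1 : (SimpleGraph.Walk.cons hya w'.bypass).IsPath := hp.cons hys
  have hp2 : (SimpleGraph.Walk.cons hyb (SimpleGraph.Walk.nil)).IsPath := by
    simp only [SimpleGraph.Walk.cons_isPath_iff, SimpleGraph.Walk.isPath_iff_eq_nil,
      SimpleGraph.Walk.support_nil, List.mem_singleton]
    exact ⟨trivial, fun h => hy (h ▸ hb)⟩
  have := SimpleGraph.isAcyclic_iff_path_unique.mp hacyc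
    ⟨SimpleGraph.Walk.cons hya w'.bypass, hp1⟩ ⟨SimpleGraph.Walk.cons hyb SimpleGraph.Walk.nil, hp2⟩
  have hlen := congrArg (fun q : G.Path y b => q.1.length) this
  simp only [SimpleGraph.Walk.length_cons, SimpleGraph.Walk.length_nil] at hlen
  exact SimpleGraph.Walk.eq_of_length_eq_zero (by simpa using hlen)

lemma sum_degIn (hacyc : G.IsAcyclic) (hD : IsGraphDomain G D) :
    ∑ x ∈ D, degIn G D x + 2 = 2 * D.card := by
  classical
  set H := G.induce (↑D : Set V) with hH
  haveI : Fintype ↥(↑D : Set V) := FinsetCoe.fintype D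
  haveI : DecidableRel H.Adj := fun a b => Classical.dec _
  have hHacyc : H.IsAcyclic := by
    intro v c hc
    exact hacyc _ (hc.map (f := (SimpleGraph.Embedding.induce (↑D : Set V)).toHom)
      Subtype.val_injective)
  have htree : H.IsTree := ⟨hD.2, hHacyc⟩
  have hedge := htree.card_edgeFinset
  have hsum := H.sum_degrees_eq_twice_card_edges
  have hcard : Fintype.card ↥(↑D : Set V) = D.card := by
    rw [← Set.toFinset_card, Finset.toFinset_coe]
  have hdeg : ∀ v : ↥(↑D : Set V), H.degree v = degIn G D v.1 := by
    intro v
    rw [degIn_def, ← SimpleGraph.card_neighborFinset_eq_degree]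
    apply Finset.card_bij (fun a _ => a.1)
    · intro a ha
      rw [SimpleGraph.mem_neighborFinset] at ha
      exact Finset.mem_filter.mpr ⟨a.2, ha⟩
    · intro a _ b _ hab
      exact Subtype.ext hab
    · intro y hy
      rw [Finset.mem_filter] at hy
      exact ⟨⟨y, hy.1⟩, by rw [SimpleGraph.mem_neighborFinset]; exact hy.2, rfl⟩
  have hsum2 : ∑ v : ↥(↑D : Set V), H.degree v = ∑ x ∈ D, degIn G D x := by
    rw [Finset.sum_congr rfl (fun v _ => hdeg v)]
    apply Finset.sum_bij (fun (v : ↥(↑D : Set V)) _ => v.1)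
    · exact fun v _ => v.2
    · exact fun a _ b _ hab => Subtype.ext hab
    · exact fun x hx => ⟨⟨x, hx⟩, Finset.mem_univ _, rfl⟩
    · exact fun v _ => rfl
  rw [← hsum2, hsum]
  omega

lemma connected_union [DecidableEq V] (hD : (G.induce (↑D : Set V)).Connected)
    (hS : ∀ s ∈ S, ∃ z ∈ D, G.Adj z s) :
    (G.induce (↑(D ∪ S) : Set V)).Connected := by
  have hsub : (↑D : Set V) ⊆ ↑(D ∪ S) := by
    intro z hz; simp only [Finset.coe_union, Set.mem_union]; exact Or.inl hz
  have hne : Nonempty ↥(↑(D ∪ S) : Set V) := by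
    obtain ⟨⟨v, hv⟩⟩ := hD.nonempty
    exact ⟨⟨v, hsub hv⟩⟩
  rw [SimpleGraph.connected_iff]
  refine ⟨?_, hne⟩
  have hkey : ∀ w : ↥(↑(D ∪ S) : Set V), ∃ z : ↥(↑(D ∪ S) : Set V), z.1 ∈ D ∧
      (G.induce (↑(D ∪ S) : Set V)).Reachable w z := by
    intro w
    have hw : w.1 ∈ D ∪ S := w.2
    rcases Finset.mem_union.mp hw with h | h
    · exact ⟨w, h, SimpleGraph.Reachable.refl _⟩
    · obtain ⟨z, hz, hadj⟩ := hS w.1 h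
      refine ⟨⟨z, hsub hz⟩, hz, ?_⟩
      have : (G.induce (↑(D ∪ S) : Set V)).Adj w ⟨z, hsub hz⟩ := hadj.symm
      exact this.reachable
  intro u v
  obtain ⟨zu, hzu, hru⟩ := hkey u
  obtain ⟨zv, hzv, hrv⟩ := hkey v
  refine hru.trans (SimpleGraph.Reachable.trans ?_ hrv.symm)
  have hreach := hD.preconnected ⟨zu.1, hzu⟩ ⟨zv.1, hzv⟩
  have := hreach.map (SimpleGraph.induceHomOfLE (G := G) hsub).toHom
  exact this

lemma degIn_pos (hD : IsGraphDomain G D) (hcard : 2 ≤ D.card) (hx : x ∈ D) :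
    1 ≤ degIn G D x := by
  classical
  obtain ⟨y, hy, hne⟩ := Finset.exists_mem_ne (s := D) (by omega) x
  obtain ⟨w⟩ := hD.2.preconnected ⟨x, hx⟩ ⟨y, hy⟩
  cases w with
  | nil => exact absurd rfl hne
  | cons h q =>
    rename_i z
    have hadj : G.Adj x z.1 := h
    have : z.1 ∈ D.filter (fun y => G.Adj x y) := Finset.mem_filter.mpr ⟨z.2, hadj⟩
    rw [degIn_def]
    exact Finset.card_pos.mpr ⟨z.1, this⟩

lemma lower_bound (hd : 2 ≤ d) (hacyc : G.IsAcyclic)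
    (hreg : ∀ v : V, (G.neighborSet v).ncard = d) (hD : IsGraphDomain G D) :
    ((d : ℝ) - 2) / ((d : ℝ) - 1) ≤ ((innerBoundary G D).card : ℝ) / (D.card : ℝ) := by
  classical
  have hn1 : 1 ≤ D.card := Finset.card_pos.mpr hD.1
  have hdR : (2 : ℝ) ≤ (d : ℝ) := by exact_mod_cast hd
  have hd1 : (0 : ℝ) < (d : ℝ) - 1 := by linarith
  rcases eq_or_lt_of_le hn1 with h1 | h2
  · -- |D| = 1
    obtain ⟨v, hv⟩ := Finset.card_eq_one.mp h1.symm
    subst hv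
    have hvB : v ∈ innerBoundary G {v} := by
      apply mem_innerBoundary_of_degIn_lt hreg hd (Finset.mem_singleton_self v)
      have : degIn G {v} v = 0 := by
        rw [degIn_def]
        simp [Finset.filter_singleton, G.irrefl]
      omega
    have hB : innerBoundary G {v} = {v} :=
      Finset.Subset.antisymm innerBoundary_subset (Finset.singleton_subset_iff.mpr hvB)
    rw [hB]
    simp only [Finset.card_singleton, Nat.cast_one, div_one, div_self (ne_of_gt (by norm_num : (0:ℝ) < 1))]
    rw [div_le_one hd1]
    linarith
  · -- |D| ≥ 2
    have hn2 : 2 ≤ D.card := h2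
    set p : V → Prop := fun x => ∃ y, y ∉ D ∧ G.Adj x y with hp
    have hBdef : innerBoundary G D = D.filter p := by
      ext z; rw [mem_innerBoundary, Finset.mem_filter]
    set b := (innerBoundary G D).card with hbdef
    set k := (D.filter (fun x => ¬ p x)).card with hkdef
    have hbk : b + k = D.card := by
      rw [hbdef, hBdef, hkdef]
      exact Finset.card_filter_add_card_filter_not p
    have hsplit : ∑ x ∈ D, degIn G D x
        = ∑ x ∈ D.filter p, degIn G D x + ∑ x ∈ D.filter (fun x => ¬ p x), degIn G D x :=
      (Finset.sum_filter_add_sum_filter_not D p _).symm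
    have hb_lb : b * 1 ≤ ∑ x ∈ D.filter p, degIn G D x := by
      rw [hbdef, hBdef]
      exact Finset.card_nsmul_le_sum _ _ _ (fun x hxm =>
        degIn_pos hD hn2 (Finset.mem_filter.mp hxm).1)
    have hk_eq : ∑ x ∈ D.filter (fun x => ¬ p x), degIn G D x = k * d := by
      rw [hkdef, Finset.sum_congr rfl (fun x hxm => degIn_eq_d hreg hd
        (Finset.mem_filter.mp hxm).2), Finset.sum_const, smul_eq_mul]
    have hsum := sum_degIn hacyc hD
    have hkey : b + k * d + 2 ≤ 2 * D.card := by omega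
    -- to reals
    rw [div_le_div_iff₀ hd1 (by exact_mod_cast hn1 : (0:ℝ) < (D.card : ℝ))]
    have hcast : (b : ℝ) + (k : ℝ) * (d : ℝ) + 2 ≤ 2 * (D.card : ℝ) := by exact_mod_cast hkey
    have hcast2 : (b : ℝ) + (k : ℝ) = (D.card : ℝ) := by exact_mod_cast hbk
    nlinarith [hcast, hcast2, hdR]

lemma saturate [DecidableEq V] (hd : 2 ≤ d) (hacyc : G.IsAcyclic)
    (hreg : ∀ v : V, (G.neighborSet v).ncard = d) (hD : IsGraphDomain G D)
    (hx : x ∈ D) (hleaf : degIn G D x = 1) :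
    ∃ D' : Finset V, IsGraphDomain G D' ∧ D'.card = D.card + (d - 1) ∧
      (innerBoundary G D').card = (innerBoundary G D).card + (d - 2) ∧
      ∃ x' ∈ D', degIn G D' x' = 1 := by
  classical
  have hfin := nbr_fin hreg hd x
  set N := hfin.toFinset with hN
  have hNcard : N.card = d := by rw [hN, ← Set.ncard_eq_toFinset_card _ hfin, hreg]
  have hNmem : ∀ y, y ∈ N ↔ G.Adj x y := by
    intro y; rw [hN, Set.Finite.mem_toFinset, SimpleGraph.mem_neighborSet]
  set S := N \ D with hS
  have hfilter : N ∩ D = D.filter (fun y => G.Adj x y) := by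
    ext y
    simp only [Finset.mem_inter, Finset.mem_filter, hNmem]
    tauto
  have hScard : S.card = d - 1 := by
    have h1 := Finset.card_sdiff_add_card_inter N D
    rw [hfilter, ← degIn_def, hleaf] at h1
    rw [hS]
    omega
  have hdisj : Disjoint D S := (Finset.sdiff_disjoint).symm
  set D' := D ∪ S with hD'
  have hcard' : D'.card = D.card + (d - 1) := by
    rw [hD', Finset.card_union_of_disjoint hdisj, hScard]
  have hSadj : ∀ s ∈ S, G.Adj x s := fun s hs => (hNmem s).mp (Finset.mem_sdiff.mp hs).1
  have hSnotD : ∀ s ∈ S, s ∉ D := fun s hs => (Finset.mem_sdiff.mp hs).2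
  have hconn' : (G.induce (↑D' : Set V)).Connected :=
    connected_union hD.2 (fun s hs => ⟨x, hx, hSadj s hs⟩)
  have hdom' : IsGraphDomain G D' := ⟨⟨x, Finset.mem_union_left _ hx⟩, hconn'⟩
  have hdegS : ∀ s ∈ S, degIn G D' s = 1 := by
    intro s hs
    rw [degIn_def]
    have heq : D'.filter (fun y => G.Adj s y) = {x} := by
      ext z
      simp only [Finset.mem_filter, Finset.mem_singleton]
      constructor
      · rintro ⟨hzD', hadj⟩
        rcases Finset.mem_union.mp hzD' with hzD | hzS
        · exact unique_attach hacyc hD.2 (a := z) (b := x) hzD hx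
            (by simpa using hSnotD s hs) hadj (hSadj s hs).symm
        · exfalso
          have hzs : z ≠ s := fun h => G.irrefl (h ▸ hadj)
          have hconn2 : (G.induce (↑(D ∪ {s}) : Set V)).Connected :=
            connected_union hD.2 (by
              intro t ht
              rw [Finset.mem_singleton] at ht
              exact ⟨x, hx, by rw [ht]; exact hSadj s hs⟩)
          have hzC : z ∉ (↑(D ∪ {s}) : Set V) := by
            simp only [Finset.coe_union, Finset.coe_singleton, Set.mem_union, Set.mem_singleton_iff]
            push_neg
            exact ⟨hSnotD z hzS, hzs⟩
          have hsx : s = x := unique_attach hacyc hconn2 (a := s) (b := x)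
            (by simp) (by simp [hx]) hzC hadj.symm ((hNmem z).mp (Finset.mem_sdiff.mp hzS).1).symm
          exact (hSnotD s hs) (hsx ▸ hx)
      · rintro rfl
        exact ⟨Finset.mem_union_left _ hx, (hSadj s hs).symm⟩
    rw [heq, Finset.card_singleton]
  have hxB : x ∈ innerBoundary G D := mem_innerBoundary_of_degIn_lt hreg hd hx (by omega)
  have hB' : innerBoundary G D' = (innerBoundary G D).erase x ∪ S := by
    ext z
    simp only [Finset.mem_union, Finset.mem_erase]
    constructor
    · intro hz
      obtain ⟨hzD', y, hyD', hadj⟩ := mem_innerBoundary.mp hz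
      rcases Finset.mem_union.mp hzD' with hzD | hzS
      · left
        refine ⟨?_, mem_innerBoundary.mpr ⟨hzD, y,
          fun hyD => hyD' (Finset.mem_union_left _ hyD), hadj⟩⟩
        rintro rfl
        apply hyD'
        have hyN : y ∈ N := (hNmem y).mpr hadj
        rcases em (y ∈ D) with h | h
        · exact Finset.mem_union_left _ h
        · exact Finset.mem_union_right _ (Finset.mem_sdiff.mpr ⟨hyN, h⟩)
      · exact Or.inr hzS
    · intro hz
      rcases hz with ⟨hzx, hzB⟩ | hzS
      · obtain ⟨hzD, y, hyD, hadj⟩ := mem_innerBoundary.mp hzB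
        refine mem_innerBoundary.mpr ⟨Finset.mem_union_left _ hzD, y, ?_, hadj⟩
        intro hyD'
        rcases Finset.mem_union.mp hyD' with h | h
        · exact hyD h
        · exact hzx (unique_attach hacyc hD.2 (a := z) (b := x) hzD hx
            (by simpa using hSnotD y h) hadj.symm (hSadj y h).symm)
      · exact mem_innerBoundary.mpr ⟨Finset.mem_union_right _ hzS,
          (degIn_lt_iff hreg hd).mp (by rw [hdegS z hzS]; omega)⟩
  have hBpos : 1 ≤ (innerBoundary G D).card := Finset.card_pos.mpr ⟨x, hxB⟩
  have hBcard : (innerBoundary G D').card = (innerBoundary G D).card + (d - 2) := by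
    rw [hB', Finset.card_union_of_disjoint (Finset.disjoint_of_subset_left
      ((Finset.erase_subset _ _).trans innerBoundary_subset) hdisj),
      Finset.card_erase_of_mem hxB, hScard]
    omega
  obtain ⟨s, hs⟩ : S.Nonempty := Finset.card_pos.mp (by omega)
  exact ⟨D', hdom', hcard', hBcard, s, Finset.mem_union_right _ hs, hdegS s hs⟩

lemma base (hd : 2 ≤ d) (hconn : G.Connected)
    (hreg : ∀ v : V, (G.neighborSet v).ncard = d) :
    ∃ D : Finset V, IsGraphDomain G D ∧ D.card = 2 ∧ (innerBoundary G D).card = 2 ∧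
      ∃ x ∈ D, degIn G D x = 1 := by
  classical
  obtain ⟨v⟩ := hconn.nonempty
  have hfin := nbr_fin hreg hd v
  have hne : (G.neighborSet v).Nonempty := by
    rw [Set.nonempty_iff_ne_empty]
    intro h
    have := hreg v
    rw [h] at this
    simp at this
    omega
  obtain ⟨w, hw⟩ := hne
  have hadj : G.Adj v w := hw
  have hvw : v ≠ w := G.ne_of_adj hadj
  set D : Finset V := {v, w} with hD
  have hmemv : v ∈ D := by simp [hD]
  have hmemw : w ∈ D := by simp [hD]
  have hunion : ({v} ∪ {w} : Finset V) = D := by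
    rw [hD]; ext z; simp
  have hconnD : (G.induce (↑D : Set V)).Connected := by
    have h1 : (G.induce (↑({v} : Finset V) : Set V)).Connected := by
      rw [SimpleGraph.connected_iff]
      refine ⟨?_, ⟨⟨v, by simp⟩⟩⟩
      intro a b
      have hab : a = b := Subtype.ext (by
        have ha := a.2; have hb := b.2
        simp only [Finset.coe_singleton, Set.mem_singleton_iff] at ha hb
        rw [ha, hb])
      rw [hab]
    have h2 := connected_union (D := ({v} : Finset V)) (S := ({w} : Finset V)) h1 (by
      intro s hs
      rw [Finset.mem_singleton] at hs
      exact ⟨v, by simp, by rw [hs]; exact hadj⟩)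
    rwa [hunion] at h2
  have hcardD : D.card = 2 := by
    rw [hD, Finset.card_insert_of_notMem (by simpa using hvw), Finset.card_singleton]
  have hdegv : degIn G D v = 1 := by
    rw [degIn_def]
    have : D.filter (fun y => G.Adj v y) = {w} := by
      ext z
      simp only [hD, Finset.mem_filter, Finset.mem_insert, Finset.mem_singleton]
      constructor
      · rintro ⟨h | h, hadj2⟩
        · exact absurd (h ▸ hadj2) (G.irrefl)
        · exact h
      · rintro rfl
        exact ⟨Or.inr rfl, hadj⟩
    rw [this, Finset.card_singleton]
  have hdegw : degIn G D w = 1 := by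
    rw [degIn_def]
    have : D.filter (fun y => G.Adj w y) = {v} := by
      ext z
      simp only [hD, Finset.mem_filter, Finset.mem_insert, Finset.mem_singleton]
      constructor
      · rintro ⟨h | h, hadj2⟩
        · exact h
        · exact absurd (h ▸ hadj2) (G.irrefl)
      · rintro rfl
        exact ⟨Or.inl rfl, hadj.symm⟩
    rw [this, Finset.card_singleton]
  have hdom : IsGraphDomain G D := ⟨⟨v, hmemv⟩, hconnD⟩
  have hB : innerBoundary G D = D := by
    apply Finset.Subset.antisymm innerBoundary_subset
    intro z hz
    rw [hD, Finset.mem_insert, Finset.mem_singleton] at hz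
    rcases hz with rfl | rfl
    · exact mem_innerBoundary_of_degIn_lt hreg hd hmemv (by omega)
    · exact mem_innerBoundary_of_degIn_lt hreg hd hmemw (by omega)
  exact ⟨D, hdom, hcardD, by rw [hB, hcardD], v, hmemv, hdegv⟩

lemma seq (hd : 2 ≤ d) (hconn : G.Connected) (hacyc : G.IsAcyclic)
    (hreg : ∀ v : V, (G.neighborSet v).ncard = d) (k : ℕ) :
    ∃ D : Finset V, IsGraphDomain G D ∧ D.card = 2 + k * (d - 1) ∧
      (innerBoundary G D).card = 2 + k * (d - 2) ∧ ∃ x ∈ D, degIn G D x = 1 := by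
  classical
  induction k with
  | zero => simpa using base hd hconn hreg
  | succ k ih =>
    obtain ⟨D, hdom, hcard, hbcard, x, hx, hleaf⟩ := ih
    obtain ⟨D', hdom', hcard', hbcard', hleaf'⟩ := saturate hd hacyc hreg hdom hx hleaf
    refine ⟨D', hdom', ?_, ?_, hleaf'⟩
    · rw [hcard', hcard, Nat.succ_mul]; omega
    · rw [hbcard', hbcard, Nat.succ_mul]; omega


end CheegerAux


/-- The inner Cheeger constant of the `d`-regular tree equals `(d−2)/(d−1)`: it is the
infimum of the ratios `|∂D|/|D|` over all domains `D`. -/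
theorem stmt_6 {V : Type*} (d : ℕ) (hd : 2 ≤ d) (T : SimpleGraph V)
    (hT : IsRegularTree T d) :
    IsGLB {r : ℝ | ∃ D : Finset V, IsGraphDomain T D ∧
        r = ((innerBoundary T D).card : ℝ) / (D.card : ℝ)}
      (((d : ℝ) - 2) / ((d : ℝ) - 1)) := by
  obtain ⟨hconn, hacyc, hreg⟩ := hT
  constructor
  · rintro r ⟨D, hDdom, rfl⟩
    exact lower_bound hd hacyc hreg hDdom
  · intro b hb
    set f : ℕ → ℝ := fun k => ((2 + k * (d - 2) : ℕ) : ℝ) / ((2 + k * (d - 1) : ℕ) : ℝ) with hf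
    have hle : ∀ k, b ≤ f k := by
      intro k
      obtain ⟨D, hdom, hcard, hbcard, -⟩ := seq hd hconn hacyc hreg k
      exact hb ⟨D, hdom, by rw [hcard, hbcard]⟩
    have hfval : ∀ k : ℕ, 1 ≤ k →
        ((2 : ℝ)/(k : ℝ) + ((d:ℝ) - 2))/((2 : ℝ)/(k : ℝ) + ((d:ℝ) - 1)) = f k := by
      intro k hk
      have hk0 : (k : ℝ) ≠ 0 := by positivity
      have hkpos : (0:ℝ) < (k:ℝ) := by positivity
      have hdR : (2:ℝ) ≤ (d:ℝ) := by exact_mod_cast hd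
      have h1 : (0:ℝ) < 2/(k:ℝ) + ((d:ℝ)-1) := by
        have h2 : (0:ℝ) < (d:ℝ)-1 := by linarith
        have h3 : (0:ℝ) ≤ 2/(k:ℝ) := by positivity
        linarith
      have h3 : (0:ℝ) < 2 + (k:ℝ)*((d:ℝ)-1) := by
        have : (0:ℝ) ≤ (k:ℝ)*((d:ℝ)-1) := mul_nonneg (by positivity) (by linarith)
        linarith
      rw [hf]
      push_cast [Nat.cast_sub (show 2 ≤ d by omega), Nat.cast_sub (show 1 ≤ d by omega)]
      rw [div_eq_div_iff h1.ne' h3.ne']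
      field_simp
    have h0 : Filter.Tendsto (fun k : ℕ => (2:ℝ)/(k:ℝ)) Filter.atTop (nhds 0) :=
      tendsto_const_div_atTop_nhds_zero_nat 2
    have hd1 : (0:ℝ) + ((d:ℝ) - 1) ≠ 0 := by
      have : (2:ℝ) ≤ (d:ℝ) := by exact_mod_cast hd
      intro h; rw [zero_add] at h; linarith
    have hnum : Filter.Tendsto (fun k : ℕ => (2:ℝ)/(k:ℝ) + ((d:ℝ) - 2)) Filter.atTop
        (nhds (0 + ((d:ℝ) - 2))) := h0.add_const _
    have hden : Filter.Tendsto (fun k : ℕ => (2:ℝ)/(k:ℝ) + ((d:ℝ) - 1)) Filter.atTop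
        (nhds (0 + ((d:ℝ) - 1))) := h0.add_const _
    have hg := hnum.div hden hd1
    have htend : Filter.Tendsto f Filter.atTop
        (nhds (((d:ℝ) - 2)/((d:ℝ) - 1))) := by
      rw [show ((d:ℝ) - 2)/((d:ℝ) - 1) = (0 + ((d:ℝ) - 2))/(0 + ((d:ℝ) - 1)) by rw [zero_add, zero_add]]
      exact hg.congr' (Filter.eventually_atTop.mpr ⟨1, hfval⟩)
    exact ge_of_tendsto' htend hle
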